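/- Let R be a unital associative ring and let M be a 3×3 matrix over R in S, i.e. every square submatrix of M is invertible and J₂(M) is invertible. Then M⁻¹ ∈ S: every square submatrix of M⁻¹ is invertible and J₂(M⁻¹) is invertible. -/

import Mathlib

open Matrix

section KontsevichDefs

variable {R : Type*} [Ring R]

/-- `J₂`: the transposed Hadamard inverse, `J₂(M)_{jk} = (M_{kj})⁻¹`
(with `Ring.inverse`, which is the two-sided inverse on units and `0` elsewhere). -/
noncomputable def J2 {m : Type*} (M : Matrix m m R) : Matrix m m R :=
  Matrix.of fun j k => Ring.inverse (M k j)

variable {m : Type*} [Fintype m] [DecidableEq m]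

/-- `J = J₂ ∘ J₁`, where `J₁(M) = M⁻¹` is the usual matrix inverse. -/
noncomputable def Jmap (M : Matrix m m R) : Matrix m m R := J2 (Ring.inverse M)

/-- `J⁻¹ = J₁ ∘ J₂`. -/
noncomputable def JinvMap (M : Matrix m m R) : Matrix m m R := Ring.inverse (J2 M)

/-- `dom(J)`: `M` invertible and all entries of `M⁻¹` invertible. -/
def domJ (M : Matrix m m R) : Prop :=
  IsUnit M ∧ ∀ j k, IsUnit (Ring.inverse M j k)

/-- `dom(J⁻¹)`: all entries of `M` invertible and `J₂(M)` invertible. -/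
def domJinv (M : Matrix m m R) : Prop :=
  (∀ j k, IsUnit (M j k)) ∧ IsUnit (J2 M)

/-- `dom(Jⁿ)` defined recursively: `M ∈ dom(Jⁿ⁺¹)` iff `M ∈ dom(J)` and `J(M) ∈ dom(Jⁿ)`. -/
def domJpow : ℕ → Matrix m m R → Prop
  | 0, _ => True
  | n + 1, M => domJ M ∧ domJpow n (Jmap M)

/-- `A ∼ B`: `B = D₁⁻¹ A D₂` for diagonal matrices `D₁, D₂` with invertible diagonal entries. -/
def simRel (A B : Matrix m m R) : Prop :=
  ∃ d₁ d₂ : m → Rˣ,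
    B = Matrix.diagonal (fun i => (((d₁ i)⁻¹ : Rˣ) : R)) * A *
        Matrix.diagonal (fun i => ((d₂ i : Rˣ) : R))

/-- entrywise conjugation `x⁻¹ A x` by an invertible ring element. -/
def conjEntry {m' : Type*} (x : Rˣ) (A : Matrix m' m' R) : Matrix m' m' R :=
  Matrix.of fun j k => ((x⁻¹ : Rˣ) : R) * A j k * (x : R)

/-- `M̂ₙ(R)`: first row and first column consist entirely of `1`'s. -/
def Mhat {m' : Type*} [Zero m'] (A : Matrix m' m' R) : Prop :=
  ∀ k, A 0 k = 1 ∧ A k 0 = 1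

/-- `Λ^L(A)_{jk} = a₁₁ a_{j1}⁻¹ a_{jk} a_{1k}⁻¹`. -/
noncomputable def LamL {m' : Type*} [Zero m'] (A : Matrix m' m' R) : Matrix m' m' R :=
  Matrix.of fun j k => A 0 0 * Ring.inverse (A j 0) * A j k * Ring.inverse (A 0 k)

/-- `Λ^R(A)_{jk} = a_{j1}⁻¹ a_{jk} a_{1k}⁻¹ a₁₁`. -/
noncomputable def LamR {m' : Type*} [Zero m'] (A : Matrix m' m' R) : Matrix m' m' R :=
  Matrix.of fun j k => Ring.inverse (A j 0) * A j k * Ring.inverse (A 0 k) * A 0 0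

/-- `Φ(A) = J₂(Λ^L(A⁻¹))`. -/
noncomputable def Phi [Zero m] (A : Matrix m m R) : Matrix m m R := J2 (LamL (Ring.inverse A))

/-- `dom(Φ)`: `A ∈ M̂ₙ(R)`, all entries of `A` invertible, `A` invertible,
all entries of `A⁻¹` invertible. -/
def domPhi [Zero m] (A : Matrix m m R) : Prop :=
  Mhat A ∧ (∀ j k, IsUnit (A j k)) ∧ IsUnit A ∧ ∀ j k, IsUnit (Ring.inverse A j k)

/-- `Φ⁻¹(B) = Λ^R(J⁻¹(B)) = Λ^R((J₂ B)⁻¹)`. -/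
noncomputable def PhiInv [Zero m] (B : Matrix m m R) : Matrix m m R := LamR (Ring.inverse (J2 B))

/-- `dom(Φ⁻¹)`: `B ∈ M̂ₙ(R)`, all entries of `B` invertible, `J₂(B)` invertible,
all entries of `J₂(B)⁻¹` invertible. -/
def domPhiInv [Zero m] (B : Matrix m m R) : Prop :=
  Mhat B ∧ (∀ j k, IsUnit (B j k)) ∧ IsUnit (J2 B) ∧ ∀ j k, IsUnit (Ring.inverse (J2 B) j k)

/-- `dom(Φⁿ)` defined recursively. -/
def domPhipow [Zero m] : ℕ → Matrix m m R → Prop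
  | 0, _ => True
  | n + 1, A => domPhi A ∧ domPhipow n (Phi A)

/-- `Ψ = J₂ ∘ Φ ∘ J₂`. -/
noncomputable def Psi [Zero m] (A : Matrix m m R) : Matrix m m R := J2 (Phi (J2 A))

/-- `dom(Ψ)`: `A ∈ M̂ₙ(R)`, all entries of `A` invertible, `J₂(A) ∈ dom(Φ)`. -/
def domPsi [Zero m] (A : Matrix m m R) : Prop :=
  Mhat A ∧ (∀ j k, IsUnit (A j k)) ∧ domPhi (J2 A)

/-- every square submatrix (equinumerous injective choices of rows and columns) is invertible. -/
def allSquareSubInv (M : Matrix (Fin 3) (Fin 3) R) : Prop :=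
  ∀ (k : ℕ) (r c : Fin k → Fin 3), Function.Injective r → Function.Injective c →
    IsUnit (M.submatrix r c)

/-- only the `1×1` and `2×2` submatrices are required to be invertible. -/
def sub12Inv (M : Matrix (Fin 3) (Fin 3) R) : Prop :=
  (∀ j k, IsUnit (M j k)) ∧
  ∀ (r c : Fin 2 → Fin 3), Function.Injective r → Function.Injective c →
    IsUnit (M.submatrix r c)

/-- `S`: all square submatrices of `M` are invertible and `J₂(M)` is invertible. -/
def Sset (R : Type*) [Ring R] : Set (Matrix (Fin 3) (Fin 3) R) :=
  {M | allSquareSubInv M ∧ IsUnit (J2 M)}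

/-- `Ŝ = S ∩ M̂₃(R)`. -/
def Shat (R : Type*) [Ring R] : Set (Matrix (Fin 3) (Fin 3) R) :=
  {M | M ∈ Sset R ∧ Mhat M}

end KontsevichDefs

/-! ### Auxiliary machinery (noncommutative Schur complements, Jacobi identity) -/

namespace NK

set_option maxHeartbeats 1000000

open Matrix

variable {R : Type*} [Ring R]

/-- two-sided inverse gives `IsUnit`. -/
theorem isUnit_of_mul_eq_one' {x y : R} (h1 : x * y = 1) (h2 : y * x = 1) : IsUnit x :=
  ⟨⟨x, y, h1, h2⟩, rfl⟩

theorem rinv_eq_of_mul {x y : R} (hx : IsUnit x) (h : x * y = 1) : Ring.inverse x = y := by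
  calc Ring.inverse x = Ring.inverse x * (x * y) := by rw [h, mul_one]
    _ = Ring.inverse x * x * y := by rw [mul_assoc]
    _ = y := by rw [Ring.inverse_mul_cancel x hx, one_mul]

theorem isUnit_rinv {x : R} (hx : IsUnit x) : IsUnit (Ring.inverse x) :=
  ⟨⟨Ring.inverse x, x, Ring.inverse_mul_cancel x hx, Ring.mul_inverse_cancel x hx⟩, rfl⟩

theorem rinv_rinv {x : R} (hx : IsUnit x) : Ring.inverse (Ring.inverse x) = x :=
  rinv_eq_of_mul (isUnit_rinv hx) (Ring.inverse_mul_cancel x hx)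

theorem rinv_neg {x : R} (hx : IsUnit x) : Ring.inverse (-x) = -(Ring.inverse x) :=
  rinv_eq_of_mul hx.neg (by rw [neg_mul_neg, Ring.mul_inverse_cancel x hx])

theorem isUnit_unit_mul_iff {u x : R} (hu : IsUnit u) : IsUnit (u * x) ↔ IsUnit x := by
  obtain ⟨v, rfl⟩ := hu
  exact Units.isUnit_units_mul v x

theorem isUnit_mul_unit_iff {u x : R} (hu : IsUnit u) : IsUnit (x * u) ↔ IsUnit x := by
  obtain ⟨v, rfl⟩ := hu
  exact Units.isUnit_mul_units x v

theorem rinv_triple {u s v : R} (hu : IsUnit u) (hs : IsUnit s) (hv : IsUnit v) :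
    Ring.inverse (u * s * v) = Ring.inverse v * Ring.inverse s * Ring.inverse u := by
  apply rinv_eq_of_mul ((isUnit_mul_unit_iff hv).2 ((isUnit_mul_unit_iff hs).2 hu))
  have h1 : v * (Ring.inverse v * Ring.inverse s * Ring.inverse u) =
      Ring.inverse s * Ring.inverse u := by
    rw [← mul_assoc, ← mul_assoc, Ring.mul_inverse_cancel v hv, one_mul]
  calc u * s * v * (Ring.inverse v * Ring.inverse s * Ring.inverse u)
      = u * s * (v * (Ring.inverse v * Ring.inverse s * Ring.inverse u)) := by rw [mul_assoc]
    _ = u * (s * Ring.inverse s) * Ring.inverse u := by rw [h1]; noncomm_ring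
    _ = 1 := by rw [Ring.mul_inverse_cancel s hs, mul_one, Ring.mul_inverse_cancel u hu]

/-- the key fully-generic scalar computation used twice. -/
theorem key_calc {u1 v1 u0 v0 iu0 iv0 w11 w10 w01 iw00 : R}
    (hv : v0 * iv0 = 1) (hu : iu0 * u0 = 1) :
    -(u1 * w11 * v1) - -(u1 * w10 * v0) * -(iv0 * iw00 * iu0) * -(u0 * w01 * v1) =
      -(u1 * (w11 - w10 * iw00 * w01) * v1) := by
  have h1 : u1 * w10 * v0 * (iv0 * iw00 * iu0) = u1 * w10 * iw00 * iu0 := by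
    calc u1 * w10 * v0 * (iv0 * iw00 * iu0) = u1 * w10 * (v0 * iv0) * iw00 * iu0 := by
          noncomm_ring
      _ = u1 * w10 * iw00 * iu0 := by rw [hv]; noncomm_ring
  have h2 : u1 * w10 * iw00 * iu0 * (u0 * w01 * v1) = u1 * w10 * iw00 * w01 * v1 := by
    calc u1 * w10 * iw00 * iu0 * (u0 * w01 * v1) = u1 * w10 * iw00 * (iu0 * u0) * w01 * v1 := by
          noncomm_ring
      _ = u1 * w10 * iw00 * w01 * v1 := by rw [hu]; noncomm_ring
  calc -(u1 * w11 * v1) - -(u1 * w10 * v0) * -(iv0 * iw00 * iu0) * -(u0 * w01 * v1)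
      = -(u1 * w11 * v1) + u1 * w10 * v0 * (iv0 * iw00 * iu0) * (u0 * w01 * v1) := by
        noncomm_ring
    _ = -(u1 * w11 * v1) + u1 * w10 * iw00 * iu0 * (u0 * w01 * v1) := by rw [h1]
    _ = -(u1 * w11 * v1) + u1 * w10 * iw00 * w01 * v1 := by rw [h2]
    _ = -(u1 * (w11 - w10 * iw00 * w01) * v1) := by noncomm_ring

/-- generic factorization step used on both sides of the main argument. -/
theorem factor_helper {x y z t : R} (hx : IsUnit x) (hz : IsUnit z) :
    Ring.inverse y - Ring.inverse x * t * Ring.inverse z =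
      -(Ring.inverse x * (t - x * Ring.inverse y * z) * Ring.inverse z) := by
  have e1 : Ring.inverse x * (x * Ring.inverse y * z) * Ring.inverse z = Ring.inverse y := by
    rw [← mul_assoc, ← mul_assoc, Ring.inverse_mul_cancel x hx, one_mul, mul_assoc,
      Ring.mul_inverse_cancel z hz, mul_one]
  rw [mul_sub, sub_mul, neg_sub, e1]

section Matrices

variable {l m n o p q : Type*}
variable [Fintype l] [Fintype m] [Fintype n] [Fintype o] [Fintype p] [Fintype q]
variable [DecidableEq l] [DecidableEq m] [DecidableEq n] [DecidableEq o] [DecidableEq p]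
  [DecidableEq q]

/-- ported to noncommutative rings from Mathlib's `Matrix.fromBlocks_eq_of_invertible₁₁`. -/
theorem fbEq11 (A : Matrix m m R) (B : Matrix m n R) (C : Matrix l m R)
    (D : Matrix l n R) [Invertible A] :
    fromBlocks A B C D =
      (fromBlocks 1 0 (C * ⅟ A) 1 : Matrix (m ⊕ l) (m ⊕ l) R) * fromBlocks A 0 0 (D - C * ⅟ A * B) *
        (fromBlocks 1 (⅟ A * B) 0 1 : Matrix (m ⊕ n) (m ⊕ n) R) := by
  simp only [fromBlocks_multiply, Matrix.mul_zero, Matrix.zero_mul, add_zero, zero_add,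
    Matrix.one_mul, Matrix.mul_one, invOf_mul_self, Matrix.mul_invOf_cancel_left,
    Matrix.invOf_mul_cancel_right, Matrix.mul_assoc, add_sub_cancel]

set_option maxHeartbeats 1000000 in
/-- ported from Mathlib's `Matrix.fromBlocks_eq_of_invertible₂₂`. -/
theorem fbEq22 (A : Matrix l m R) (B : Matrix l n R) (C : Matrix n m R)
    (D : Matrix n n R) [Invertible D] :
    fromBlocks A B C D =
      (fromBlocks 1 (B * ⅟ D) 0 1 : Matrix (l ⊕ n) (l ⊕ n) R) * fromBlocks (A - B * ⅟ D * C) 0 0 D *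
        (fromBlocks 1 0 (⅟ D * C) 1 : Matrix (m ⊕ n) (m ⊕ n) R) :=
  (Matrix.reindex (Equiv.sumComm _ _) (Equiv.sumComm _ _)).injective <| by
    simpa [reindex_apply, Equiv.sumComm_symm, ← submatrix_mul_equiv _ _ _ (Equiv.sumComm n m), ←
      submatrix_mul_equiv _ _ _ (Equiv.sumComm n l), Equiv.sumComm_apply,
      fromBlocks_submatrix_sum_swap_sum_swap] using fbEq11 D C B A

/-- ported from Mathlib's `Matrix.fromBlocksZero₂₁Invertible` (two-sided version). -/
def fbZ21Inv (A : Matrix m m R) (B : Matrix m n R) (D : Matrix n n R)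
    [Invertible A] [Invertible D] : Invertible (fromBlocks A B 0 D) where
  invOf := fromBlocks (⅟ A) (-(⅟ A * B * ⅟ D)) 0 (⅟ D)
  invOf_mul_self := by
    simp_rw [fromBlocks_multiply, Matrix.mul_zero, Matrix.zero_mul, zero_add, add_zero,
      Matrix.neg_mul, invOf_mul_self, Matrix.invOf_mul_cancel_right, add_neg_cancel,
      fromBlocks_one]
  mul_invOf_self := by
    simp_rw [fromBlocks_multiply, Matrix.mul_zero, Matrix.zero_mul, zero_add, add_zero,
      Matrix.mul_neg, ← Matrix.mul_assoc, mul_invOf_self, Matrix.one_mul, neg_add_cancel,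
      fromBlocks_one]

/-- ported from Mathlib's `Matrix.fromBlocksZero₁₂Invertible` (two-sided version). -/
def fbZ12Inv (A : Matrix m m R) (C : Matrix n m R) (D : Matrix n n R)
    [Invertible A] [Invertible D] : Invertible (fromBlocks A 0 C D) where
  invOf := fromBlocks (⅟ A) 0 (-(⅟ D * C * ⅟ A)) (⅟ D)
  invOf_mul_self := by
    simp_rw [fromBlocks_multiply, Matrix.mul_zero, Matrix.zero_mul, zero_add, add_zero,
      Matrix.neg_mul, invOf_mul_self, Matrix.invOf_mul_cancel_right, neg_add_cancel,
      fromBlocks_one]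
  mul_invOf_self := by
    simp_rw [fromBlocks_multiply, Matrix.mul_zero, Matrix.zero_mul, zero_add, add_zero,
      Matrix.mul_neg, ← Matrix.mul_assoc, mul_invOf_self, Matrix.one_mul, add_neg_cancel,
      fromBlocks_one]

/-- invertibility of the diagonal blocks of an invertible block-diagonal matrix. -/
def invOfFbDiag (A : Matrix m m R) (D : Matrix n n R)
    [Invertible (fromBlocks A 0 0 D)] : Invertible A × Invertible D where
  fst :=
    { invOf := (⅟ (fromBlocks A 0 0 D)).toBlocks₁₁
      invOf_mul_self := by
        have := invOf_mul_self (fromBlocks A 0 0 D)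
        rw [← fromBlocks_toBlocks (⅟ (fromBlocks A 0 0 D)), fromBlocks_multiply] at this
        replace := congr_arg Matrix.toBlocks₁₁ this
        simpa only [Matrix.toBlocks_fromBlocks₁₁, Matrix.mul_zero, add_zero,
          ← fromBlocks_one] using this
      mul_invOf_self := by
        have := mul_invOf_self (fromBlocks A 0 0 D)
        rw [← fromBlocks_toBlocks (⅟ (fromBlocks A 0 0 D)), fromBlocks_multiply] at this
        replace := congr_arg Matrix.toBlocks₁₁ this
        simpa only [Matrix.toBlocks_fromBlocks₁₁, Matrix.zero_mul, add_zero,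
          ← fromBlocks_one] using this }
  snd :=
    { invOf := (⅟ (fromBlocks A 0 0 D)).toBlocks₂₂
      invOf_mul_self := by
        have := invOf_mul_self (fromBlocks A 0 0 D)
        rw [← fromBlocks_toBlocks (⅟ (fromBlocks A 0 0 D)), fromBlocks_multiply] at this
        replace := congr_arg Matrix.toBlocks₂₂ this
        simpa only [Matrix.toBlocks_fromBlocks₂₂, Matrix.mul_zero, zero_add,
          ← fromBlocks_one] using this
      mul_invOf_self := by
        have := mul_invOf_self (fromBlocks A 0 0 D)
        rw [← fromBlocks_toBlocks (⅟ (fromBlocks A 0 0 D)), fromBlocks_multiply] at this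
        replace := congr_arg Matrix.toBlocks₂₂ this
        simpa only [Matrix.toBlocks_fromBlocks₂₂, Matrix.zero_mul, zero_add,
          ← fromBlocks_one] using this }

/-- ported from Mathlib's `Matrix.fromBlocks₂₂Invertible`. -/
def fb22Inv (A : Matrix m m R) (B : Matrix m n R) (C : Matrix n m R)
    (D : Matrix n n R) [Invertible D] [Invertible (A - B * ⅟ D * C)] :
    Invertible (fromBlocks A B C D) := by
  convert Invertible.copy' _ _ (fromBlocks (⅟ (A - B * ⅟ D * C)) (-(⅟ (A - B * ⅟ D * C) * B * ⅟ D))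
    (-(⅟ D * C * ⅟ (A - B * ⅟ D * C))) (⅟ D + ⅟ D * C * ⅟ (A - B * ⅟ D * C) * B * ⅟ D))
      (fbEq22 _ _ _ _) _
  · letI : Invertible (1 : Matrix n n R) := invertibleOne
    letI : Invertible (1 : Matrix m m R) := invertibleOne
    refine Invertible.mul ?_ (fbZ12Inv _ _ _)
    exact Invertible.mul (fbZ21Inv _ _ _) (fbZ21Inv _ _ _)
  · show
      _ =
        (fromBlocks 1 0 (-((1 : Matrix n n R) * (⅟ D * C) * (1 : Matrix m m R))) 1 :
          Matrix (m ⊕ n) (m ⊕ n) R) *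
          (fromBlocks (⅟ (A - B * ⅟ D * C)) (-(⅟ (A - B * ⅟ D * C) * (0 : Matrix m n R) * ⅟ D)) 0 (⅟ D) *
            (fromBlocks 1 (-((1 : Matrix m m R) * (B * ⅟ D) * (1 : Matrix n n R))) 0 1 :
              Matrix (m ⊕ n) (m ⊕ n) R))
    simp only [fromBlocks_multiply, invOf_one, Matrix.one_mul, Matrix.mul_one, Matrix.zero_mul,
      Matrix.mul_zero, add_zero, zero_add, neg_zero, Matrix.mul_neg, Matrix.neg_mul, neg_neg, ←
      Matrix.mul_assoc, add_comm (⅟D)]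

/-- ported from Mathlib's `Matrix.invOf_fromBlocks₂₂_eq`. -/
theorem invOf_fb22_eq (A : Matrix m m R) (B : Matrix m n R) (C : Matrix n m R)
    (D : Matrix n n R) [Invertible D] [Invertible (A - B * ⅟ D * C)]
    [Invertible (fromBlocks A B C D)] :
    ⅟ (fromBlocks A B C D) =
      fromBlocks (⅟ (A - B * ⅟ D * C)) (-(⅟ (A - B * ⅟ D * C) * B * ⅟ D))
        (-(⅟ D * C * ⅟ (A - B * ⅟ D * C))) (⅟ D + ⅟ D * C * ⅟ (A - B * ⅟ D * C) * B * ⅟ D) := by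
  letI := fb22Inv A B C D
  exact (congrArg (fun i : Invertible (fromBlocks A B C D) => i.invOf)
    (Subsingleton.elim _ (fb22Inv A B C D))).trans rfl

/-- ported from Mathlib's `Matrix.invertibleOfFromBlocks₂₂Invertible`. -/
def invOfFb22 (A : Matrix m m R) (B : Matrix m n R) (C : Matrix n m R)
    (D : Matrix n n R) [Invertible D] [Invertible (fromBlocks A B C D)] :
    Invertible (A - B * ⅟ D * C) := by
  suffices Invertible (fromBlocks (A - B * ⅟ D * C) 0 0 D) by
    exact (invOfFbDiag (A - B * ⅟ D * C) D).1
  letI : Invertible (1 : Matrix n n R) := invertibleOne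
  letI : Invertible (1 : Matrix m m R) := invertibleOne
  letI iDC : Invertible (fromBlocks 1 0 (⅟ D * C) 1 : Matrix (m ⊕ n) (m ⊕ n) R) :=
    fbZ12Inv _ _ _
  letI iBD : Invertible (fromBlocks 1 (B * ⅟ D) 0 1 : Matrix (m ⊕ n) (m ⊕ n) R) :=
    fbZ21Inv _ _ _
  letI iBDC := Invertible.copy ‹_› _ (fbEq22 A B C D).symm
  refine (iBD.mulLeft _).symm ?_
  exact (iDC.mulRight _).symm iBDC

/-- `IsUnit` of a `1×1` matrix is `IsUnit` of its entry. -/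
theorem isUnit_one_by_one (A : Matrix (Fin 1) (Fin 1) R) : IsUnit A ↔ IsUnit (A 0 0) := by
  constructor
  · intro h
    have h1 : (A * Ring.inverse A) 0 0 = 1 := by
      rw [Ring.mul_inverse_cancel _ h]; simp [Matrix.one_apply]
    have h2 : (Ring.inverse A * A) 0 0 = 1 := by
      rw [Ring.inverse_mul_cancel _ h]; simp [Matrix.one_apply]
    rw [Matrix.mul_apply] at h1 h2
    simp only [Fin.sum_univ_one] at h1 h2
    exact isUnit_of_mul_eq_one' h1 h2
  · intro h
    refine isUnit_of_mul_eq_one' (y := Matrix.of fun _ _ => Ring.inverse (A 0 0)) ?_ ?_ <;>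
      · ext i j
        fin_cases i; fin_cases j
        simp [Matrix.mul_apply, Matrix.one_apply, Ring.mul_inverse_cancel _ h,
          Ring.inverse_mul_cancel _ h]

theorem rinv_one_by_one (A : Matrix (Fin 1) (Fin 1) R) (h : IsUnit (A 0 0)) :
    Ring.inverse A 0 0 = Ring.inverse (A 0 0) := by
  have hA : IsUnit A := (isUnit_one_by_one A).2 h
  have he : Ring.inverse A = Matrix.of fun _ _ => Ring.inverse (A 0 0) := by
    apply rinv_eq_of_mul hA
    ext i j
    fin_cases i; fin_cases j
    simp [Matrix.mul_apply, Matrix.one_apply, Ring.mul_inverse_cancel _ h]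
  rw [he]
  rfl

theorem isUnit_submatrix_of {A : Matrix o o R} (h : IsUnit A) (e₁ e₂ : p ≃ o) :
    IsUnit (A.submatrix ⇑e₁ ⇑e₂) := by
  refine isUnit_of_mul_eq_one' (y := (Ring.inverse A).submatrix ⇑e₂ ⇑e₁) ?_ ?_
  · rw [Matrix.submatrix_mul_equiv, Ring.mul_inverse_cancel _ h, Matrix.submatrix_one_equiv]
  · rw [Matrix.submatrix_mul_equiv, Ring.inverse_mul_cancel _ h, Matrix.submatrix_one_equiv]

theorem isUnit_submatrix_equiv' {A : Matrix o o R} (e₁ e₂ : p ≃ o) :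
    IsUnit (A.submatrix ⇑e₁ ⇑e₂) ↔ IsUnit A := by
  constructor
  · intro h
    have h2 := isUnit_submatrix_of h e₁.symm e₂.symm
    rwa [Matrix.submatrix_submatrix, Equiv.self_comp_symm, Equiv.self_comp_symm,
      Matrix.submatrix_id_id] at h2
  · intro h
    exact isUnit_submatrix_of h e₁ e₂

theorem rinv_submatrix (A : Matrix o o R) (hA : IsUnit A) (e₁ e₂ : p ≃ o) :
    Ring.inverse (A.submatrix ⇑e₁ ⇑e₂) = (Ring.inverse A).submatrix ⇑e₂ ⇑e₁ :=
  rinv_eq_of_mul ((isUnit_submatrix_equiv' e₁ e₂).2 hA)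
    (by rw [Matrix.submatrix_mul_equiv, Ring.mul_inverse_cancel _ hA,
      Matrix.submatrix_one_equiv])

theorem isUnit_fromBlocks₂₂_iff (A : Matrix m m R) (B : Matrix m n R) (C : Matrix n m R)
    (D : Matrix n n R) (hD : IsUnit D) :
    IsUnit (fromBlocks A B C D) ↔ IsUnit (A - B * Ring.inverse D * C) := by
  letI iD := hD.invertible
  have hD' : Ring.inverse D = ⅟ D := rinv_eq_of_mul hD (mul_invOf_self D)
  rw [hD']
  constructor
  · intro h
    letI := h.invertible
    letI := invOfFb22 A B C D
    exact isUnit_of_invertible _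
  · intro h
    letI := h.invertible
    letI := fb22Inv A B C D
    exact isUnit_of_invertible _

theorem rinv_fromBlocks₂₂ (A : Matrix m m R) (B : Matrix m n R) (C : Matrix n m R)
    (D : Matrix n n R) (hD : IsUnit D) (hP : IsUnit (fromBlocks A B C D)) :
    IsUnit (A - B * Ring.inverse D * C) ∧
      (Ring.inverse (fromBlocks A B C D)).toBlocks₁₁ =
        Ring.inverse (A - B * Ring.inverse D * C) := by
  letI iD := hD.invertible
  have hD' : Ring.inverse D = ⅟ D := rinv_eq_of_mul hD (mul_invOf_self D)
  letI iP := hP.invertible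
  letI iS := invOfFb22 A B C D
  have h1 : IsUnit (A - B * Ring.inverse D * C) := by rw [hD']; exact isUnit_of_invertible _
  refine ⟨h1, ?_⟩
  have h2 : Ring.inverse (fromBlocks A B C D) = ⅟ (fromBlocks A B C D) :=
    rinv_eq_of_mul hP (mul_invOf_self _)
  have h3 : Ring.inverse (A - B * Ring.inverse D * C) = ⅟ (A - B * ⅟ D * C) := by
    rw [hD']
    exact rinv_eq_of_mul (hD' ▸ h1) (mul_invOf_self _)
  rw [h2, h3, invOf_fb22_eq, toBlocks_fromBlocks₁₁]

theorem isUnit_fromBlocks₁₁_iff (A : Matrix m m R) (B : Matrix m n R) (C : Matrix n m R)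
    (D : Matrix n n R) (hA : IsUnit A) :
    IsUnit (fromBlocks A B C D) ↔ IsUnit (D - C * Ring.inverse A * B) := by
  have hswap : (fromBlocks A B C D).submatrix ⇑(Equiv.sumComm n m) ⇑(Equiv.sumComm n m) =
      fromBlocks D C B A := fromBlocks_submatrix_sum_swap_sum_swap A B C D
  rw [← isUnit_submatrix_equiv' (A := fromBlocks A B C D) (Equiv.sumComm n m)
    (Equiv.sumComm n m), hswap]
  exact isUnit_fromBlocks₂₂_iff D C B A hA

/-- Jacobi-type statement: a square submatrix of `M⁻¹` is invertible provided the
complementary submatrix of `M` is, and its inverse is the corresponding generalized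
Schur complement. -/
theorem jacobi (M : Matrix o o R) (hM : IsUnit M) (ρ γ : (p ⊕ q) ≃ o)
    (hD : IsUnit (M.submatrix (⇑γ ∘ Sum.inr) (⇑ρ ∘ Sum.inr))) :
    IsUnit ((Ring.inverse M).submatrix (⇑ρ ∘ Sum.inl) (⇑γ ∘ Sum.inl)) ∧
      Ring.inverse ((Ring.inverse M).submatrix (⇑ρ ∘ Sum.inl) (⇑γ ∘ Sum.inl)) =
        M.submatrix (⇑γ ∘ Sum.inl) (⇑ρ ∘ Sum.inl) -
          M.submatrix (⇑γ ∘ Sum.inl) (⇑ρ ∘ Sum.inr) *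
              Ring.inverse (M.submatrix (⇑γ ∘ Sum.inr) (⇑ρ ∘ Sum.inr)) *
            M.submatrix (⇑γ ∘ Sum.inr) (⇑ρ ∘ Sum.inl) := by
  set N := Ring.inverse M with hN
  have hPb : M.submatrix ⇑γ ⇑ρ =
      fromBlocks (M.submatrix (⇑γ ∘ Sum.inl) (⇑ρ ∘ Sum.inl))
        (M.submatrix (⇑γ ∘ Sum.inl) (⇑ρ ∘ Sum.inr))
        (M.submatrix (⇑γ ∘ Sum.inr) (⇑ρ ∘ Sum.inl))
        (M.submatrix (⇑γ ∘ Sum.inr) (⇑ρ ∘ Sum.inr)) := by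
    ext i j
    cases i <;> cases j <;> rfl
  have hPu : IsUnit (M.submatrix ⇑γ ⇑ρ) := isUnit_submatrix_of hM γ ρ
  have hPQ : M.submatrix ⇑γ ⇑ρ * N.submatrix ⇑ρ ⇑γ = 1 := by
    rw [Matrix.submatrix_mul_equiv, hN, Ring.mul_inverse_cancel _ hM,
      Matrix.submatrix_one_equiv]
  have hQ : Ring.inverse (M.submatrix ⇑γ ⇑ρ) = N.submatrix ⇑ρ ⇑γ :=
    rinv_eq_of_mul hPu hPQ
  have hfb := rinv_fromBlocks₂₂ (M.submatrix (⇑γ ∘ Sum.inl) (⇑ρ ∘ Sum.inl))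
    (M.submatrix (⇑γ ∘ Sum.inl) (⇑ρ ∘ Sum.inr))
    (M.submatrix (⇑γ ∘ Sum.inr) (⇑ρ ∘ Sum.inl))
    (M.submatrix (⇑γ ∘ Sum.inr) (⇑ρ ∘ Sum.inr)) hD (hPb ▸ hPu)
  have hblk : (N.submatrix ⇑ρ ⇑γ).toBlocks₁₁ = N.submatrix (⇑ρ ∘ Sum.inl) (⇑γ ∘ Sum.inl) := by
    ext i j
    rfl
  have hval : N.submatrix (⇑ρ ∘ Sum.inl) (⇑γ ∘ Sum.inl) =
      Ring.inverse (M.submatrix (⇑γ ∘ Sum.inl) (⇑ρ ∘ Sum.inl) -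
        M.submatrix (⇑γ ∘ Sum.inl) (⇑ρ ∘ Sum.inr) *
            Ring.inverse (M.submatrix (⇑γ ∘ Sum.inr) (⇑ρ ∘ Sum.inr)) *
          M.submatrix (⇑γ ∘ Sum.inr) (⇑ρ ∘ Sum.inl)) := by
    rw [← hblk, ← hQ, hPb]
    exact hfb.2
  constructor
  · rw [hval]
    exact isUnit_rinv hfb.1
  · rw [hval, rinv_rinv hfb.1]

/-- the standard `(0,0)`-corner reindexing equivalence for `Fin 3`. -/
noncomputable def e12 : (Fin 1 ⊕ Fin 2) ≃ Fin 3 :=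
  Equiv.ofBijective (Sum.elim (fun _ => 0) Fin.succ) (by decide)

/-- the standard `(0,0)`-corner reindexing equivalence for `Fin 2`. -/
noncomputable def e11 : (Fin 1 ⊕ Fin 1) ≃ Fin 2 :=
  Equiv.ofBijective (Sum.elim (fun _ => 0) (fun _ => 1)) (by decide)

theorem isUnit_corner3 (X : Matrix (Fin 3) (Fin 3) R) (h : IsUnit (X 0 0)) :
    IsUnit X ↔ IsUnit (Matrix.of fun j k : Fin 2 =>
      X j.succ k.succ - X j.succ 0 * Ring.inverse (X 0 0) * X 0 k.succ) := by
  have hb : X.submatrix ⇑e12 ⇑e12 =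
      fromBlocks (Matrix.of fun _ _ : Fin 1 => X 0 0)
        (Matrix.of fun (_ : Fin 1) (k : Fin 2) => X 0 k.succ)
        (Matrix.of fun (j : Fin 2) (_ : Fin 1) => X j.succ 0)
        (Matrix.of fun j k : Fin 2 => X j.succ k.succ) := by
    ext i j
    cases i <;> cases j <;> rfl
  have hA : IsUnit (Matrix.of fun _ _ : Fin 1 => X 0 0) :=
    (isUnit_one_by_one _).2 h
  rw [← isUnit_submatrix_equiv' (A := X) e12 e12, hb, isUnit_fromBlocks₁₁_iff _ _ _ _ hA]
  have he : ((Matrix.of fun j k : Fin 2 => X j.succ k.succ) -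
      (Matrix.of fun (j : Fin 2) (_ : Fin 1) => X j.succ 0) *
          Ring.inverse (Matrix.of fun _ _ : Fin 1 => X 0 0) *
        (Matrix.of fun (_ : Fin 1) (k : Fin 2) => X 0 k.succ)) =
      Matrix.of fun j k : Fin 2 =>
        X j.succ k.succ - X j.succ 0 * Ring.inverse (X 0 0) * X 0 k.succ := by
    have hof : IsUnit ((Matrix.of fun _ _ : Fin 1 => X 0 0) 0 0) := h
    have hre : Ring.inverse (Matrix.of fun _ _ : Fin 1 => X 0 0) 0 0 =
        Ring.inverse (X 0 0) := rinv_one_by_one _ hof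
    ext j k
    simp only [Matrix.sub_apply, Matrix.mul_apply, Fin.sum_univ_one, Matrix.of_apply]
    rw [hre]
  rw [he]

theorem isUnit_corner2 (Y : Matrix (Fin 2) (Fin 2) R) (h : IsUnit (Y 0 0)) :
    IsUnit Y ↔ IsUnit (Y 1 1 - Y 1 0 * Ring.inverse (Y 0 0) * Y 0 1) := by
  have hb : Y.submatrix ⇑e11 ⇑e11 =
      fromBlocks (Matrix.of fun _ _ : Fin 1 => Y 0 0)
        (Matrix.of fun _ _ : Fin 1 => Y 0 1)
        (Matrix.of fun _ _ : Fin 1 => Y 1 0)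
        (Matrix.of fun _ _ : Fin 1 => Y 1 1) := by
    ext i j
    cases i <;> cases j <;> rfl
  have hA : IsUnit (Matrix.of fun _ _ : Fin 1 => Y 0 0) := (isUnit_one_by_one _).2 h
  rw [← isUnit_submatrix_equiv' (A := Y) e11 e11, hb, isUnit_fromBlocks₁₁_iff _ _ _ _ hA,
    isUnit_one_by_one]
  have he : ((Matrix.of fun _ _ : Fin 1 => Y 1 1) -
      (Matrix.of fun _ _ : Fin 1 => Y 1 0) *
          Ring.inverse (Matrix.of fun _ _ : Fin 1 => Y 0 0) *
        (Matrix.of fun _ _ : Fin 1 => Y 0 1)) 0 0 =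
      Y 1 1 - Y 1 0 * Ring.inverse (Y 0 0) * Y 0 1 := by
    have hof : IsUnit ((Matrix.of fun _ _ : Fin 1 => Y 0 0) 0 0) := h
    have hre : Ring.inverse (Matrix.of fun _ _ : Fin 1 => Y 0 0) 0 0 =
        Ring.inverse (Y 0 0) := rinv_one_by_one _ hof
    simp only [Matrix.sub_apply, Matrix.mul_apply, Fin.sum_univ_one, Matrix.of_apply]
    rw [hre]
  rw [he]

theorem corner2_val (Y : Matrix (Fin 2) (Fin 2) R) (hY : IsUnit Y) (h11 : IsUnit (Y 1 1)) :
    IsUnit (Y 0 0 - Y 0 1 * Ring.inverse (Y 1 1) * Y 1 0) ∧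
      Y 0 0 - Y 0 1 * Ring.inverse (Y 1 1) * Y 1 0 = Ring.inverse (Ring.inverse Y 0 0) := by
  have hb : Y.submatrix ⇑e11 ⇑e11 =
      fromBlocks (Matrix.of fun _ _ : Fin 1 => Y 0 0)
        (Matrix.of fun _ _ : Fin 1 => Y 0 1)
        (Matrix.of fun _ _ : Fin 1 => Y 1 0)
        (Matrix.of fun _ _ : Fin 1 => Y 1 1) := by
    ext i j
    cases i <;> cases j <;> rfl
  have hD : IsUnit (Matrix.of fun _ _ : Fin 1 => Y 1 1) := (isUnit_one_by_one _).2 h11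
  have hY' : IsUnit (Y.submatrix ⇑e11 ⇑e11) := (isUnit_submatrix_equiv' e11 e11).2 hY
  have hfb := rinv_fromBlocks₂₂ (Matrix.of fun _ _ : Fin 1 => Y 0 0)
    (Matrix.of fun _ _ : Fin 1 => Y 0 1) (Matrix.of fun _ _ : Fin 1 => Y 1 0)
    (Matrix.of fun _ _ : Fin 1 => Y 1 1) hD (hb ▸ hY')
  have hSe : ((Matrix.of fun _ _ : Fin 1 => Y 0 0) -
      (Matrix.of fun _ _ : Fin 1 => Y 0 1) *
          Ring.inverse (Matrix.of fun _ _ : Fin 1 => Y 1 1) *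
        (Matrix.of fun _ _ : Fin 1 => Y 1 0)) 0 0 =
      Y 0 0 - Y 0 1 * Ring.inverse (Y 1 1) * Y 1 0 := by
    have hof : IsUnit ((Matrix.of fun _ _ : Fin 1 => Y 1 1) 0 0) := h11
    have hre : Ring.inverse (Matrix.of fun _ _ : Fin 1 => Y 1 1) 0 0 =
        Ring.inverse (Y 1 1) := rinv_one_by_one _ hof
    simp only [Matrix.sub_apply, Matrix.mul_apply, Fin.sum_univ_one, Matrix.of_apply]
    rw [hre]
  have h1 : IsUnit (Y 0 0 - Y 0 1 * Ring.inverse (Y 1 1) * Y 1 0) := by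
    rw [← hSe]
    exact (isUnit_one_by_one _).1 hfb.1
  refine ⟨h1, ?_⟩
  have h5 := congr_fun (congr_fun hfb.2 (0 : Fin 1)) (0 : Fin 1)
  rw [← hb, rinv_submatrix Y hY e11 e11] at h5
  have h6 : Ring.inverse Y 0 0 = (Ring.inverse ((Matrix.of fun _ _ : Fin 1 => Y 0 0) -
      (Matrix.of fun _ _ : Fin 1 => Y 0 1) *
          Ring.inverse (Matrix.of fun _ _ : Fin 1 => Y 1 1) *
        (Matrix.of fun _ _ : Fin 1 => Y 1 0))) 0 0 := h5
  rw [rinv_one_by_one _ (by rw [hSe]; exact h1), hSe] at h6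
  rw [h6, rinv_rinv h1]

/-- corner reduction of `IsUnit (J2 X)` to the `2×2` Schur complement at `(0,0)`. -/
theorem isUnit_J2_iff (X : Matrix (Fin 3) (Fin 3) R) (h : IsUnit (X 0 0)) :
    IsUnit (J2 X) ↔ IsUnit (Matrix.of fun j k : Fin 2 =>
      Ring.inverse (X k.succ j.succ) -
        Ring.inverse (X 0 j.succ) * X 0 0 * Ring.inverse (X k.succ 0)) := by
  have h00 : IsUnit ((J2 X) 0 0) := isUnit_rinv h
  rw [isUnit_corner3 (J2 X) h00]
  have he : (Matrix.of fun j k : Fin 2 =>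
      (J2 X) j.succ k.succ - (J2 X) j.succ 0 * Ring.inverse ((J2 X) 0 0) * (J2 X) 0 k.succ) =
      Matrix.of fun j k : Fin 2 =>
        Ring.inverse (X k.succ j.succ) -
          Ring.inverse (X 0 j.succ) * X 0 0 * Ring.inverse (X k.succ 0) := by
    ext j k
    show (J2 X) j.succ k.succ - (J2 X) j.succ 0 * Ring.inverse ((J2 X) 0 0) * (J2 X) 0 k.succ = _
    have : Ring.inverse ((J2 X) 0 0) = X 0 0 := by
      show Ring.inverse (Ring.inverse (X 0 0)) = X 0 0
      exact rinv_rinv h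
    rw [this]
    rfl
  rw [he]

/-- reduction of a `2×2` matrix of the form `Z j k = -(u j * w j k * v k)` to a scalar. -/
theorem corner_reduce (Z : Matrix (Fin 2) (Fin 2) R) (u v : Fin 2 → R) (w : Fin 2 → Fin 2 → R)
    (hu : ∀ j, IsUnit (u j)) (hv : ∀ k, IsUnit (v k)) (hw : ∀ j k, IsUnit (w j k))
    (hZ : ∀ j k, Z j k = -(u j * w j k * v k)) :
    IsUnit Z ↔ IsUnit (w 1 1 - w 1 0 * Ring.inverse (w 0 0) * w 0 1) := by
  have h00 : IsUnit (Z 0 0) := by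
    rw [hZ 0 0, IsUnit.neg_iff]
    exact (isUnit_mul_unit_iff (hv 0)).2 ((isUnit_mul_unit_iff (hw 0 0)).2 (hu 0))
  rw [isUnit_corner2 Z h00]
  have hinv : Ring.inverse (Z 0 0) =
      -(Ring.inverse (v 0) * Ring.inverse (w 0 0) * Ring.inverse (u 0)) := by
    rw [hZ 0 0, rinv_neg ((isUnit_mul_unit_iff (hv 0)).2
      ((isUnit_mul_unit_iff (hw 0 0)).2 (hu 0))), rinv_triple (hu 0) (hw 0 0) (hv 0)]
  have hscal : Z 1 1 - Z 1 0 * Ring.inverse (Z 0 0) * Z 0 1 =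
      -(u 1 * (w 1 1 - w 1 0 * Ring.inverse (w 0 0) * w 0 1) * v 1) := by
    rw [hZ 1 1, hZ 1 0, hZ 0 1, hinv]
    exact key_calc (Ring.mul_inverse_cancel _ (hv 0)) (Ring.inverse_mul_cancel _ (hu 0))
  rw [hscal, IsUnit.neg_iff, isUnit_mul_unit_iff (hv 1), isUnit_unit_mul_iff (hu 1)]

end Matrices

/-- missing index of an injective pair in `Fin 3`. -/
def miss (r : Fin 2 → Fin 3) : Fin 3 := -(r 0 + r 1)

theorem pair_bij : ∀ r : Fin 2 → Fin 3, Function.Injective r →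
    Function.Bijective (Sum.elim r (fun _ : Fin 1 => miss r)) := by decide

/-- completion of an injective pair to an equivalence. -/
noncomputable def pEquiv (r : Fin 2 → Fin 3) (hr : Function.Injective r) : (Fin 2 ⊕ Fin 1) ≃ Fin 3 :=
  Equiv.ofBijective _ (pair_bij r hr)

/-- the two indices other than `j`, in increasing order. -/
def others : Fin 3 → Fin 2 → Fin 3 := ![![1, 2], ![0, 2], ![0, 1]]

theorem others_inj : ∀ j : Fin 3, Function.Injective (others j) := by decide

theorem single_bij : ∀ j : Fin 3,
    Function.Bijective (Sum.elim (fun _ : Fin 1 => j) (others j)) := by decide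

/-- completion of a single index to an equivalence. -/
noncomputable def sEquiv (j : Fin 3) : (Fin 1 ⊕ Fin 2) ≃ Fin 3 :=
  Equiv.ofBijective _ (single_bij j)

theorem pair01_inj : ∀ s : Fin 2, Function.Injective ![(0 : Fin 3), s.succ] := by decide

theorem miss_pair01 : ∀ s : Fin 2, miss ![(0 : Fin 3), s.succ] = (![1, 0] s : Fin 2).succ := by
  decide

/-- `σ`-quantities: `sg M s t = M₀₀ - M₀ₜ₊₁ (M_{s+1,t+1})⁻¹ M_{s+1,0}`. -/
noncomputable def sg {R : Type*} [Ring R] (M : Matrix (Fin 3) (Fin 3) R) (s t : Fin 2) : R :=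
  M 0 0 - M 0 t.succ * Ring.inverse (M s.succ t.succ) * M s.succ 0

theorem sg_def {R : Type*} [Ring R] (M : Matrix (Fin 3) (Fin 3) R) (s t : Fin 2) :
    sg M s t = M 0 0 - M 0 t.succ * Ring.inverse (M s.succ t.succ) * M s.succ 0 := rfl

/-- specialization of `jacobi` to `2×2` submatrices of the inverse of a `3×3` matrix,
with the `(0,0)` entry of the inverse computed explicitly. -/
theorem jacobi3 {R : Type*} [Ring R] (M : Matrix (Fin 3) (Fin 3) R) (hM : IsUnit M)
    (r c : Fin 2 → Fin 3) (hr : Function.Injective r) (hc : Function.Injective c)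
    (hD : IsUnit (M (miss c) (miss r))) :
    IsUnit ((Ring.inverse M).submatrix r c) ∧
      Ring.inverse ((Ring.inverse M).submatrix r c) 0 0 =
        M (c 0) (r 0) -
          M (c 0) (miss r) * Ring.inverse (M (miss c) (miss r)) * M (miss c) (r 0) := by
  have hD' : IsUnit (M.submatrix (⇑(pEquiv c hc) ∘ Sum.inr) (⇑(pEquiv r hr) ∘ Sum.inr)) :=
    (isUnit_one_by_one _).2 hD
  have hjac := jacobi M hM (pEquiv r hr) (pEquiv c hc) hD'
  refine ⟨hjac.1, ?_⟩
  have h5 : Ring.inverse ((Ring.inverse M).submatrix r c) 0 0 =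
      (M.submatrix (⇑(pEquiv c hc) ∘ Sum.inl) (⇑(pEquiv r hr) ∘ Sum.inl) -
        M.submatrix (⇑(pEquiv c hc) ∘ Sum.inl) (⇑(pEquiv r hr) ∘ Sum.inr) *
            Ring.inverse (M.submatrix (⇑(pEquiv c hc) ∘ Sum.inr) (⇑(pEquiv r hr) ∘ Sum.inr)) *
          M.submatrix (⇑(pEquiv c hc) ∘ Sum.inr) (⇑(pEquiv r hr) ∘ Sum.inl)) 0 0 :=
    congr_fun (congr_fun hjac.2 (0 : Fin 2)) (0 : Fin 2)
  have hre : Ring.inverse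
      (M.submatrix (⇑(pEquiv c hc) ∘ Sum.inr) (⇑(pEquiv r hr) ∘ Sum.inr)) 0 0 =
      Ring.inverse (M (miss c) (miss r)) := by
    rw [rinv_one_by_one _ (show IsUnit ((M.submatrix (⇑(pEquiv c hc) ∘ Sum.inr)
      (⇑(pEquiv r hr) ∘ Sum.inr)) 0 0) from hD)]
    rfl
  rw [h5]
  simp only [Matrix.sub_apply, Matrix.mul_apply, Fin.sum_univ_one, Matrix.submatrix_apply,
    Function.comp_apply]
  rw [hre]
  rfl

end NK

set_option maxHeartbeats 1600000 in
/-- If `M` is a `3×3` matrix in `S` (all square submatrices of `M`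
invertible and `J₂(M)` invertible), then `M⁻¹ ∈ S`. -/
theorem inverse_mem_S {R : Type*} [Ring R] (M : Matrix (Fin 3) (Fin 3) R)
    (hM : M ∈ Sset R) : Ring.inverse M ∈ Sset R := by
  obtain ⟨hsub, hJ⟩ := hM
  have hMu : IsUnit M := by
    have h := hsub 3 id id Function.injective_id Function.injective_id
    rwa [Matrix.submatrix_id_id] at h
  set N := Ring.inverse M with hNdef
  have hNu : IsUnit N := NK.isUnit_rinv hMu
  -- all entries of `M` are invertible
  have hE : ∀ j k : Fin 3, IsUnit (M j k) := fun j k =>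
    (NK.isUnit_one_by_one _).1 (hsub 1 (fun _ => j) (fun _ => k)
      (fun a b _ => Subsingleton.elim a b) (fun a b _ => Subsingleton.elim a b))
  -- all entries of `N = M⁻¹` are invertible
  have hNE : ∀ j k : Fin 3, IsUnit (N j k) := by
    intro j k
    have hD : IsUnit (M.submatrix (⇑(NK.sEquiv k) ∘ Sum.inr) (⇑(NK.sEquiv j) ∘ Sum.inr)) :=
      hsub 2 (NK.others k) (NK.others j) (NK.others_inj k) (NK.others_inj j)
    have h := (NK.jacobi M hMu (NK.sEquiv j) (NK.sEquiv k) hD).1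
    exact (NK.isUnit_one_by_one _).1 h
  -- all `2×2` submatrices of `N` are invertible
  have hN2 : ∀ (r c : Fin 2 → Fin 3), Function.Injective r → Function.Injective c →
      IsUnit (N.submatrix r c) := fun r c hr hc =>
    (NK.jacobi3 M hMu r c hr hc (hE _ _)).1
  -- the `σ`-quantities are invertible
  have hsig : ∀ s t : Fin 2, IsUnit (NK.sg M s t) := by
    intro s t
    have hY : IsUnit (M.submatrix ![0, s.succ] ![0, t.succ]) :=
      hsub 2 _ _ (NK.pair01_inj s) (NK.pair01_inj t)
    have h11 : IsUnit ((M.submatrix ![0, s.succ] ![0, t.succ]) 1 1) := by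
      simp only [Matrix.submatrix_apply, Matrix.cons_val_one, Matrix.head_cons]
      exact hE _ _
    have h1 := (NK.corner2_val (M.submatrix ![0, s.succ] ![0, t.succ]) hY h11).1
    simp only [Matrix.submatrix_apply, Matrix.cons_val_zero, Matrix.cons_val_one,
      Matrix.head_cons] at h1
    rw [NK.sg_def]
    exact h1
  -- KEY identity (noncommutative Jacobi):
  have hKEY : ∀ j k : Fin 2,
      N 0 0 - N 0 j.succ * Ring.inverse (N k.succ j.succ) * N k.succ 0 =
        Ring.inverse (NK.sg M (![1, 0] j) (![1, 0] k)) := by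
    intro j k
    have hjac := NK.jacobi3 M hMu ![0, k.succ] ![0, j.succ] (NK.pair01_inj k)
      (NK.pair01_inj j) (hE _ _)
    have h7 : Ring.inverse (N.submatrix ![0, k.succ] ![0, j.succ]) 0 0 =
        NK.sg M (![1, 0] j) (![1, 0] k) := by
      rw [hjac.2]
      simp only [NK.sg, NK.miss_pair01, Matrix.cons_val_zero]
    have h11 : IsUnit ((N.submatrix ![0, k.succ] ![0, j.succ]) 1 1) := by
      simp only [Matrix.submatrix_apply, Matrix.cons_val_one, Matrix.head_cons]
      exact hNE _ _
    have h8 := (NK.corner2_val (N.submatrix ![0, k.succ] ![0, j.succ]) hjac.1 h11).2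
    simp only [Matrix.submatrix_apply, Matrix.cons_val_zero, Matrix.cons_val_one,
      Matrix.head_cons] at h8
    rw [h7] at h8
    exact h8
  refine ⟨?_, ?_⟩
  · -- all square submatrices of `N` are invertible
    intro k r c hr hc
    have hk : k ≤ 3 := by
      have h := Fintype.card_le_of_injective r hr
      simpa using h
    interval_cases k
    · exact NK.isUnit_of_mul_eq_one' (y := 1) (by ext i j; exact i.elim0)
        (by ext i j; exact i.elim0)
    · exact (NK.isUnit_one_by_one _).2 (hNE (r 0) (c 0))
    · exact hN2 r c hr hc
    · have hrb : Function.Bijective r :=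
        (Fintype.bijective_iff_injective_and_card r).2 ⟨hr, by simp⟩
      have hcb : Function.Bijective c :=
        (Fintype.bijective_iff_injective_and_card c).2 ⟨hc, by simp⟩
      exact NK.isUnit_submatrix_of hNu (Equiv.ofBijective r hrb) (Equiv.ofBijective c hcb)
  · -- `J₂(N)` is invertible
    -- reduce `J₂ M` to the scalar `g`
    have hJM := NK.isUnit_J2_iff M (hE 0 0)
    have hZJ : ∀ j k : Fin 2,
        (Matrix.of fun j k : Fin 2 =>
          Ring.inverse (M k.succ j.succ) -
            Ring.inverse (M 0 j.succ) * M 0 0 * Ring.inverse (M k.succ 0)) j k =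
        -(Ring.inverse (M 0 j.succ) * NK.sg M k j * Ring.inverse (M k.succ 0)) := by
      intro j k
      show Ring.inverse (M k.succ j.succ) -
          Ring.inverse (M 0 j.succ) * M 0 0 * Ring.inverse (M k.succ 0) = _
      rw [NK.factor_helper (hE 0 j.succ) (hE k.succ 0), ← NK.sg_def M k j]
    have hiffJ := NK.corner_reduce _ (fun j => Ring.inverse (M 0 j.succ))
      (fun k => Ring.inverse (M k.succ 0)) (fun j k => NK.sg M k j)
      (fun j => NK.isUnit_rinv (hE 0 j.succ)) (fun k => NK.isUnit_rinv (hE k.succ 0))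
      (fun j k => hsig k j) hZJ
    -- reduce `J₂ N` to the same scalar `g`
    have hJN := NK.isUnit_J2_iff N (hNE 0 0)
    have hZN : ∀ j k : Fin 2,
        (Matrix.of fun j k : Fin 2 =>
          Ring.inverse (N k.succ j.succ) -
            Ring.inverse (N 0 j.succ) * N 0 0 * Ring.inverse (N k.succ 0)) j k =
        -(Ring.inverse (N 0 j.succ) * Ring.inverse (NK.sg M (![1, 0] j) (![1, 0] k)) *
          Ring.inverse (N k.succ 0)) := by
      intro j k
      show Ring.inverse (N k.succ j.succ) -
          Ring.inverse (N 0 j.succ) * N 0 0 * Ring.inverse (N k.succ 0) = _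
      rw [NK.factor_helper (hNE 0 j.succ) (hNE k.succ 0), hKEY j k]
    have hiffN := NK.corner_reduce _ (fun j => Ring.inverse (N 0 j.succ))
      (fun k => Ring.inverse (N k.succ 0))
      (fun j k => Ring.inverse (NK.sg M (![1, 0] j) (![1, 0] k)))
      (fun j => NK.isUnit_rinv (hNE 0 j.succ)) (fun k => NK.isUnit_rinv (hNE k.succ 0))
      (fun j k => NK.isUnit_rinv (hsig _ _)) hZN
    -- normalize the index arithmetic in `hiffN`
    simp only [Matrix.cons_val_zero, Matrix.cons_val_one, Matrix.head_cons] at hiffN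
    rw [NK.rinv_rinv (hsig 1 1), NK.factor_helper (hsig 0 1) (hsig 1 0), IsUnit.neg_iff,
      NK.isUnit_mul_unit_iff (NK.isUnit_rinv (hsig 1 0)),
      NK.isUnit_unit_mul_iff (NK.isUnit_rinv (hsig 0 1))] at hiffN
    -- transfer invertibility through the common scalar
    rw [hJN, hiffN]
    rw [hJM, hiffJ] at hJ
    exact hJ
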